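/- Let d be an odd prime, ε = 2π/d, and q, q', m, m' ∈ ℤ/d with q, q' nonzero and q ≠ q'. Define χ^{(q)}_{m,j} = -(qε/2)j² + (mε + qπ)j. For each j let j̃ satisfy j̃q' ≡ jq (mod d). Then |∑_{j=0}^{d-1} exp(i(χ^{(q)}_{m,j} - χ^{(q')}_{m',j̃}))|² = d. -/

import Mathlib

open Real

/-- The phase function of the quantum-walk eigenvectors:
`χ^{(q)}_{m,j} = -(qε/2) j² + (mε + qπ) j` with `ε = 2π/d`. -/
noncomputable def qwChi (d q m : ℕ) (j : ℕ) : ℝ :=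
  -((q : ℝ) * (2 * Real.pi / d) / 2) * (j : ℝ) ^ 2 +
    ((m : ℝ) * (2 * Real.pi / d) + (q : ℝ) * Real.pi) * (j : ℝ)

open Complex Finset


noncomputable def zF (d : ℕ) (K : ℤ) : ℂ := Complex.exp (2 * Real.pi * Complex.I * K / d)

lemma zF_add (d : ℕ) (K L : ℤ) : zF d (K + L) = zF d K * zF d L := by
  rw [zF, zF, zF, ← Complex.exp_add]
  congr 1
  push_cast
  ring

lemma zF_zero (d : ℕ) : zF d 0 = 1 := by simp [zF]

lemma zF_conj (d : ℕ) (K : ℤ) : (starRingEnd ℂ) (zF d K) = zF d (-K) := by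
  rw [zF, zF, ← Complex.exp_conj]
  congr 1
  simp [map_div₀, Complex.conj_I, map_ofNat]

lemma zF_int_mul (d : ℕ) (hd : d ≠ 0) (t : ℤ) : zF d (d * t) = 1 := by
  rw [zF]
  have hd' : (d : ℂ) ≠ 0 := Nat.cast_ne_zero.mpr hd
  have h : 2 * (Real.pi : ℂ) * Complex.I * (((d : ℤ) * t : ℤ) : ℂ) / d
      = t * (2 * Real.pi * Complex.I) := by
    push_cast
    field_simp
  rw [h, Complex.exp_int_mul_two_pi_mul_I]

lemma zF_congr (d : ℕ) (hd : d ≠ 0) {K L : ℤ} (h : (K : ZMod d) = (L : ZMod d)) :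
    zF d K = zF d L := by
  rw [ZMod.intCast_eq_intCast_iff] at h
  obtain ⟨t, ht⟩ := (Int.ModEq.dvd h : (d:ℤ) ∣ L - K)
  have : L = K + d * t := by linarith
  rw [this, zF_add, zF_int_mul d hd, mul_one]

lemma zF_pow (d : ℕ) (c : ℤ) (n : ℕ) : zF d (c * n) = zF d c ^ n := by
  rw [zF, zF, ← Complex.exp_nat_mul]
  congr 1
  push_cast
  ring

lemma zF_ne_one (d : ℕ) (hd : d ≠ 0) {c : ℤ} (hc : (c : ZMod d) ≠ 0) : zF d c ≠ 1 := by
  intro h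
  apply hc
  rw [zF, Complex.exp_eq_one_iff] at h
  obtain ⟨n, hn⟩ := h
  have hd' : (d : ℂ) ≠ 0 := Nat.cast_ne_zero.mpr hd
  have hpi : (Real.pi : ℂ) ≠ 0 := by exact_mod_cast Real.pi_ne_zero
  have h2 : (2 : ℂ) * Real.pi * Complex.I ≠ 0 :=
    mul_ne_zero (mul_ne_zero two_ne_zero hpi) Complex.I_ne_zero
  have hcd : (c : ℂ) = ((n * d : ℤ) : ℂ) := by
    apply mul_left_cancel₀ h2
    push_cast
    field_simp at hn
    linear_combination (2 * (Real.pi : ℂ) * Complex.I) * hn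
  have : c = n * d := by exact_mod_cast hcd
  rw [this]
  push_cast
  simp [ZMod.natCast_self]

lemma sum_val_eq {M : Type*} [AddCommMonoid M] (d : ℕ) [NeZero d] (g : ℕ → M) :
    ∑ y : ZMod d, g (ZMod.val y) = ∑ n ∈ Finset.range d, g n := by
  apply Finset.sum_nbij' (fun y => ZMod.val y) (fun n => (n : ZMod d))
  · intro a _; exact Finset.mem_range.mpr (ZMod.val_lt a)
  · intro a _; exact Finset.mem_univ _
  · intro a _; exact ZMod.natCast_rightInverse a
  · intro a ha; exact ZMod.val_cast_of_lt (Finset.mem_range.mp ha)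
  · intro a _; rfl

lemma sum_zF_linear (d : ℕ) (hd : d ≠ 0) (c : ℤ) :
    haveI : NeZero d := ⟨hd⟩
    ∑ y : ZMod d, zF d (c * (ZMod.val y : ℤ))
      = if (c : ZMod d) = 0 then (d : ℂ) else 0 := by
  haveI : NeZero d := ⟨hd⟩
  by_cases hc : (c : ZMod d) = 0
  · simp only [hc, if_pos]
    have : ∀ y : ZMod d, zF d (c * (ZMod.val y : ℤ)) = 1 := by
      intro y
      rw [show (1:ℂ) = zF d 0 from (zF_zero d).symm]
      apply zF_congr d hd
      push_cast
      rw [hc]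
      ring
    simp only [this]
    simp [ZMod.card]
  · simp only [hc, if_neg, if_false]
    have key : ∀ y : ZMod d, zF d (c * (ZMod.val y : ℤ)) = zF d c ^ (ZMod.val y) := by
      intro y; exact_mod_cast zF_pow d c (ZMod.val y)
    simp only [key]
    rw [sum_val_eq d (fun n => zF d c ^ n)]
    rw [geom_sum_eq (zF_ne_one d hd hc)]
    have : zF d c ^ d = 1 := by
      rw [← zF_pow]
      rw [show c * (d:ℤ) = (d:ℤ) * c by ring]
      exact zF_int_mul d hd c
    rw [this]
    simp

lemma core_sum (d : ℕ) (hp : d.Prime) (hd : d ≠ 0) (hd2 : ((2:ℕ) : ZMod d) ≠ 0) (a b : ℤ)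
    (ha : (a : ZMod d) ≠ 0) :
    (∑ j ∈ Finset.range d, zF d (a * j ^ 2 + b * j)) *
      (starRingEnd ℂ) (∑ j ∈ Finset.range d, zF d (a * j ^ 2 + b * j)) = d := by
  haveI : NeZero d := ⟨hd⟩
  haveI : Fact d.Prime := ⟨hp⟩
  set G : ZMod d → ℂ := fun x => zF d (a * (ZMod.val x : ℤ) ^ 2 + b * (ZMod.val x : ℤ)) with hG
  have hSG : (∑ j ∈ Finset.range d, zF d (a * j ^ 2 + b * j)) = ∑ x : ZMod d, G x := by
    rw [← sum_val_eq d (fun n => zF d (a * (n:ℤ) ^ 2 + b * (n:ℤ)))]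
  rw [hSG, map_sum, Finset.sum_mul_sum]
  -- reindex x = t + y
  have step1 : ∀ y : ZMod d, ∑ x : ZMod d, G x * (starRingEnd ℂ) (G y)
      = ∑ t : ZMod d, G (t + y) * (starRingEnd ℂ) (G y) := by
    intro y
    exact (Fintype.sum_equiv (Equiv.addRight y) _ _ (fun t => rfl)).symm
  calc (∑ x : ZMod d, ∑ y : ZMod d, G x * (starRingEnd ℂ) (G y))
      = ∑ y : ZMod d, ∑ x : ZMod d, G x * (starRingEnd ℂ) (G y) := Finset.sum_comm
    _ = ∑ y : ZMod d, ∑ t : ZMod d, G (t + y) * (starRingEnd ℂ) (G y) := by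
        exact Finset.sum_congr rfl (fun y _ => step1 y)
    _ = ∑ t : ZMod d, ∑ y : ZMod d, G (t + y) * (starRingEnd ℂ) (G y) := Finset.sum_comm
    _ = ∑ t : ZMod d, zF d (a * (ZMod.val t : ℤ)^2 + b * (ZMod.val t : ℤ)) *
          ∑ y : ZMod d, zF d ((2 * a * (ZMod.val t : ℤ)) * (ZMod.val y : ℤ)) := by
        apply Finset.sum_congr rfl
        intro t _
        rw [Finset.mul_sum]
        apply Finset.sum_congr rfl
        intro y _
        rw [hG, zF_conj, ← zF_add, ← zF_add]
        apply zF_congr d hd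
        have hv : ∀ z : ZMod d, ((ZMod.val z : ℕ) : ZMod d) = z := fun z =>
          ZMod.natCast_rightInverse z
        push_cast
        simp only [hv]
        ring
    _ = ∑ t : ZMod d, zF d (a * (ZMod.val t : ℤ)^2 + b * (ZMod.val t : ℤ)) *
          (if ((2 * a * (ZMod.val t : ℤ) : ℤ) : ZMod d) = 0 then (d:ℂ) else 0) := by
        apply Finset.sum_congr rfl
        intro t _
        rw [sum_zF_linear d hd]
    _ = (d : ℂ) := by
        have hv : ∀ z : ZMod d, ((ZMod.val z : ℕ) : ZMod d) = z := fun z =>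
          ZMod.natCast_rightInverse z
        have hcond : ∀ t : ZMod d, (((2 * a * (ZMod.val t : ℤ) : ℤ) : ZMod d) = 0) ↔ t = 0 := by
          intro t
          push_cast
          simp only [hv]
          constructor
          · intro h
            rcases mul_eq_zero.mp h with h' | h'
            · rcases mul_eq_zero.mp h' with h'' | h''
              · exact absurd (by exact_mod_cast h'') hd2
              · exact absurd h'' ha
            · exact h'
          · intro h; rw [h, mul_zero]
        rw [Finset.sum_eq_single (0 : ZMod d)]
        · simp [zF_zero, ZMod.val_zero]
        · intro t _ ht
          rw [if_neg (fun hh => ht ((hcond t).mp hh)), mul_zero]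
        · intro h
          exact absurd (Finset.mem_univ _) h

def zK (d q m j : ℕ) : ℕ := q * (j * (d - j) / 2) + m * j

lemma even_jdj (d j : ℕ) (hodd : Odd d) : 2 ∣ j * (d - j) := by
  rcases Nat.even_or_odd j with hj | hj
  · exact Dvd.dvd.mul_right hj.two_dvd _
  · exact Dvd.dvd.mul_left (Nat.Odd.sub_odd hodd hj).two_dvd _

lemma zF_sub (d : ℕ) (K L : ℤ) : zF d (K - L) = zF d K / zF d L := by
  rw [zF, zF, zF, ← Complex.exp_sub]
  congr 1
  push_cast
  ring

lemma exp_chi (d q m j : ℕ) (hd : d ≠ 0) (hodd : Odd d) (hj : j ≤ d) :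
    Complex.exp (Complex.I * (qwChi d q m j : ℝ)) = zF d (zK d q m j) := by
  have hdvd : 2 ∣ j * (d - j) := even_jdj d j hodd
  set e : ℕ := j * (d - j) / 2 with he
  have h2n : 2 * e = j * (d - j) := Nat.mul_div_cancel' hdvd
  have h2 : 2 * (e : ℂ) = (j : ℂ) * ((d : ℂ) - j) := by
    have h := congrArg (Nat.cast : ℕ → ℂ) h2n
    push_cast [Nat.cast_sub hj] at h
    exact h
  rw [zF]
  congr 1
  have hdc : (d : ℂ) ≠ 0 := Nat.cast_ne_zero.mpr hd
  have hK : ((zK d q m j : ℤ) : ℂ) = q * (e : ℂ) + m * j := by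
    rw [zK, ← he]
    push_cast
    ring
  rw [hK, qwChi]
  push_cast
  field_simp
  linear_combination (-(q : ℂ)) * h2

lemma zK_cast (d q m j : ℕ) [NeZero d] [Fact d.Prime] (hj : j ≤ d) (h2 : (2 : ZMod d) ≠ 0)
    (hodd : Odd d) :
    ((zK d q m j : ℕ) : ZMod d)
      = (q : ZMod d) * ((2 : ZMod d)⁻¹ * (-(j : ZMod d) ^ 2)) + (m : ZMod d) * j := by
  have hdvd : 2 ∣ j * (d - j) := even_jdj d j hodd
  set e : ℕ := j * (d - j) / 2 with hee
  have h2n : 2 * e = j * (d - j) := Nat.mul_div_cancel' hdvd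
  have he : ((e : ℕ) : ZMod d) = (2 : ZMod d)⁻¹ * (-(j : ZMod d) ^ 2) := by
    apply mul_left_cancel₀ h2
    rw [← mul_assoc, mul_inv_cancel₀ h2, one_mul]
    have h := congrArg (Nat.cast : ℕ → ZMod d) h2n
    push_cast [Nat.cast_sub hj] at h
    rw [show ((d : ℕ) : ZMod d) = 0 from ZMod.natCast_self d] at h
    rw [h]
    ring
  rw [zK, ← hee]
  push_cast
  rw [he]

theorem phase_gauss_sum_abs_sq (d : ℕ) (hd : d.Prime) (hodd : Odd d)
    (q q' m m' : ℕ) (hq : q < d) (hq' : q' < d) (hm : m < d) (hm' : m' < d)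
    (hq0 : q ≠ 0) (hq'0 : q' ≠ 0) (hne : q ≠ q')
    (tj : ℕ → ℕ) (htj : ∀ j, tj j < d) (hcong : ∀ j, (tj j * q') % d = (j * q) % d) :
    ‖∑ j ∈ Finset.range d,
        Complex.exp (Complex.I * ((qwChi d q m j : ℝ) - qwChi d q' m' (tj j)))‖ ^ 2
      = d := by
  have hd0 : d ≠ 0 := hd.ne_zero
  haveI : NeZero d := ⟨hd0⟩
  haveI : Fact d.Prime := ⟨hd⟩
  -- basic nonzeroness in ZMod d
  have hcast_inj : ∀ x y : ℕ, x < d → y < d → ((x : ZMod d) = (y : ZMod d)) → x = y := by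
    intro x y hx hy h
    have := congrArg ZMod.val h
    rwa [ZMod.val_cast_of_lt hx, ZMod.val_cast_of_lt hy] at this
  have hqz : (q : ZMod d) ≠ 0 := by
    intro h
    exact hq0 (hcast_inj q 0 hq hd.pos (by simpa using h))
  have hq'z : (q' : ZMod d) ≠ 0 := by
    intro h
    exact hq'0 (hcast_inj q' 0 hq' hd.pos (by simpa using h))
  have hqq' : (q : ZMod d) - (q' : ZMod d) ≠ 0 := by
    intro h
    exact hne (hcast_inj q q' hq hq' (sub_eq_zero.mp h))
  have h2 : (2 : ZMod d) ≠ 0 := by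
    have : ((2 : ℕ) : ZMod d) = (2 : ZMod d) := by push_cast; rfl
    rw [← this]
    rw [Ne, ZMod.natCast_eq_zero_iff]
    intro hdvd
    have : d = 2 := (Nat.prime_dvd_prime_iff_eq hd Nat.prime_two).mp hdvd
    rw [this] at hodd
    exact (Nat.not_odd_iff_even.mpr (by norm_num)) hodd
  -- the ZMod coefficients
  set w : ZMod d := (q : ZMod d) * (q' : ZMod d)⁻¹ with hw
  set A : ZMod d := (2 : ZMod d)⁻¹ * ((q' : ZMod d) * w ^ 2 - (q : ZMod d)) with hA
  set B : ZMod d := (m : ZMod d) - (m' : ZMod d) * w with hB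
  have hAne : A ≠ 0 := by
    have hfac : (q' : ZMod d) * w ^ 2 - (q : ZMod d)
        = (q : ZMod d) * (q' : ZMod d)⁻¹ * ((q : ZMod d) - (q' : ZMod d)) := by
      rw [hw]
      field_simp
    rw [hA, hfac]
    exact mul_ne_zero (inv_ne_zero h2)
      (mul_ne_zero (mul_ne_zero hqz (inv_ne_zero hq'z)) hqq')
  set a : ℤ := (ZMod.val A : ℤ) with ha
  set b : ℤ := (ZMod.val B : ℤ) with hb
  have hAa : ((a : ℤ) : ZMod d) = A := by
    rw [ha]
    push_cast
    simp [ZMod.natCast_val, ZMod.cast_id]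
  have hBb : ((b : ℤ) : ZMod d) = B := by
    rw [hb]
    push_cast
    simp [ZMod.natCast_val, ZMod.cast_id]
  have haz : (a : ZMod d) ≠ 0 := by rw [hAa]; exact hAne
  -- rewrite the summand
  have hterm : ∀ j ∈ Finset.range d,
      Complex.exp (Complex.I * ((qwChi d q m j : ℝ) - qwChi d q' m' (tj j)))
        = zF d (a * (j : ℤ) ^ 2 + b * (j : ℤ)) := by
    intro j hjmem
    have hjlt : j < d := Finset.mem_range.mp hjmem
    have hnlt : tj j < d := htj j
    have hsplit : Complex.exp (Complex.I * ((qwChi d q m j : ℝ) - qwChi d q' m' (tj j)))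
        = Complex.exp (Complex.I * (qwChi d q m j : ℝ)) /
          Complex.exp (Complex.I * (qwChi d q' m' (tj j) : ℝ)) := by
      rw [← Complex.exp_sub]
      congr 1
      push_cast
      ring
    rw [hsplit, exp_chi d q m j hd0 hodd hjlt.le, exp_chi d q' m' (tj j) hd0 hodd hnlt.le,
      ← zF_sub]
    apply zF_congr d hd0
    -- casts to ZMod d
    have hKj := zK_cast d q m j hjlt.le h2 hodd
    have hKn := zK_cast d q' m' (tj j) hnlt.le h2 hodd
    have hn : ((tj j : ℕ) : ZMod d) = (j : ZMod d) * w := by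
      have hmod : ((tj j * q' : ℕ) : ZMod d) = ((j * q : ℕ) : ZMod d) :=
        (ZMod.natCast_eq_natCast_iff _ _ _).mpr (hcong j)
      push_cast at hmod
      rw [hw]
      field_simp
      linear_combination hmod
    push_cast
    rw [hKj, hKn, hn, hAa, hBb, hA, hB]
    ring
  rw [Finset.sum_congr rfl hterm]
  -- apply the core computation
  set S : ℂ := ∑ j ∈ Finset.range d, zF d (a * (j : ℤ) ^ 2 + b * (j : ℤ)) with hS
  have key : S * (starRingEnd ℂ) S = d := core_sum d hd hd0 (by push_cast at h2 ⊢; exact h2) a b haz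
  rw [Complex.sq_norm]
  have h2c : ((Complex.normSq S : ℝ) : ℂ) = ((d : ℝ) : ℂ) := by
    rw [← Complex.mul_conj, key]
    push_cast
    ring
  exact_mod_cast h2c
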